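/- arXiv:1608.08282 — 2 statements merged into one kernel-verified Lean document; each statement's English description precedes it below -/
import Mathlib

section
/- Let k be a field, V a nonzero k-vector space, and T a linear transformation of V; give End_k(V) the function topology. Then the following are equivalent: (1) T is topologically nilpotent, i.e., the sequence (T^i)_{i=1}^∞ converges to 0 in the function topology; (2) V = ⋃_{i=1}^∞ ker(T^i); (3) T is strictly triangularizable; (4) T is triangularizable and, for a ∈ k, ker(T − aI) ≠ 0 if and only if a = 0. -/
universe u v

open Polynomial

/-- A linear transformation `T` is *triangularizable* if `V` has a basis `b` indexed by a
well-ordered set (with strict order `r`) such that `T (b i)` lies in the span of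
`{b j : j ≤ i}` for every index `i`. -/
def Triangularizable {k : Type u} {V : Type v} [Field k] [AddCommGroup V] [Module k V]
    (T : Module.End k V) : Prop :=
  ∃ (ι : Type v) (r : ι → ι → Prop) (b : Module.Basis ι k V),
    IsWellOrder ι r ∧ ∀ i, T (b i) ∈ Submodule.span k (⇑b '' {j | r j i ∨ j = i})

/-- `T` is strictly triangularizable: strictly triangular with respect to some basis indexed
by a well-ordered set. -/
def StrictlyTriangularizable {k : Type u} {V : Type v} [Field k] [AddCommGroup V] [Module k V]
    (T : Module.End k V) : Prop :=
  ∃ (ι : Type v) (r : ι → ι → Prop) (b : Module.Basis ι k V),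
    IsWellOrder ι r ∧ ∀ i, T (b i) ∈ Submodule.span k (⇑b '' {j | r j i})

/-- The function (finite) topology on `End_k(V)`: the topology induced from the product
topology on `V → V`, where `V` carries the discrete topology. -/
def endFunctionTopology (k : Type u) (V : Type v) [Field k] [AddCommGroup V] [Module k V] :
    TopologicalSpace (Module.End k V) :=
  TopologicalSpace.induced (fun f => (f : V → V))
    (@Pi.topologicalSpace V (fun _ => V) (fun _ => ⊥))

section aux

variable {k : Type u} {V : Type v} [Field k] [AddCommGroup V] [Module k V]

private lemma ker_pow_mono (T : Module.End k V) :
    Monotone fun n : ℕ => LinearMap.ker (T ^ n) := by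
  intro m n h x hx
  rw [LinearMap.mem_ker] at hx ⊢
  rw [← Nat.sub_add_cancel h, pow_add, Module.End.mul_apply, hx, map_zero]

/-- (1) ↔ (2). -/
private lemma part1_iff (T : Module.End k V) :
    Filter.Tendsto (fun i : ℕ => T ^ i) Filter.atTop
      (@nhds _ (endFunctionTopology k V) 0) ↔
    ∀ v : V, ∃ i : ℕ, 1 ≤ i ∧ (T ^ i) v = 0 := by
  letI : TopologicalSpace V := ⊥
  haveI : DiscreteTopology V := ⟨rfl⟩
  rw [show endFunctionTopology k V =
      TopologicalSpace.induced (fun f : Module.End k V => (f : V → V)) inferInstance from rfl,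
    nhds_induced, Filter.tendsto_comap_iff]
  have h0 : ((0 : Module.End k V) : V → V) = (0 : V → V) := rfl
  rw [h0, tendsto_pi_nhds]
  have key : ∀ v : V, (∀ᶠ i in Filter.atTop, (T ^ i) v = 0) ↔
      (∃ i, 1 ≤ i ∧ (T ^ i) v = 0) := by
    intro v
    rw [Filter.eventually_atTop]
    constructor
    · rintro ⟨N, hN⟩
      exact ⟨N + 1, Nat.le_add_left _ _, hN _ (Nat.le_succ _)⟩
    · rintro ⟨i, -, hi⟩
      refine ⟨i, fun j hj => ?_⟩
      rw [← Nat.sub_add_cancel hj, pow_add, Module.End.mul_apply, hi, map_zero]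
  constructor
  · intro h v
    have := h v
    rw [nhds_discrete, Filter.tendsto_pure] at this
    exact (key v).1 this
  · intro h v
    rw [nhds_discrete, Filter.tendsto_pure]
    exact (key v).2 (h v)

/-- (3) → (2). -/
private lemma strict_to_union {T : Module.End k V} (h : StrictlyTriangularizable T) :
    ∀ v : V, ∃ i : ℕ, 1 ≤ i ∧ (T ^ i) v = 0 := by
  obtain ⟨ι, r, b, hwo, htri⟩ := h
  haveI := hwo
  set U : Submodule k V := ⨆ n : ℕ, LinearMap.ker (T ^ (n + 1)) with hUdef
  have hmono : Monotone fun n : ℕ => LinearMap.ker (T ^ (n + 1)) :=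
    fun m n h => ker_pow_mono T (Nat.add_le_add_right h 1)
  have hdir := hmono.directed_le
  have hmem : ∀ x, x ∈ U ↔ ∃ n : ℕ, (T ^ (n + 1)) x = 0 := by
    intro x
    rw [hUdef, Submodule.mem_iSup_of_directed _ hdir]
    simp [LinearMap.mem_ker]
  have hbase : ∀ i, b i ∈ U := by
    intro i
    induction i using IsWellFounded.induction r with
    | ind i IH =>
      have hTbi : T (b i) ∈ U := by
        refine Submodule.span_le.2 ?_ (htri i)
        rintro _ ⟨j, hj, rfl⟩
        exact IH j hj
      obtain ⟨n, hn⟩ := (hmem _).1 hTbi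
      refine (hmem _).2 ⟨n + 1, ?_⟩
      rw [pow_succ, Module.End.mul_apply, hn]
  have htop : U = ⊤ := by
    rw [eq_top_iff, ← b.span_eq, Submodule.span_le]
    rintro _ ⟨i, rfl⟩
    exact hbase i
  intro v
  obtain ⟨n, hn⟩ := (hmem v).1 (htop ▸ Submodule.mem_top)
  exact ⟨n + 1, Nat.le_add_left _ _, hn⟩

/-- (2) → (3). -/
private lemma union_to_strict {T : Module.End k V}
    (h : ∀ v : V, ∃ i : ℕ, 1 ≤ i ∧ (T ^ i) v = 0) : StrictlyTriangularizable T := by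
  classical
  set W : ℕ → Submodule k V := fun n => LinearMap.ker (T ^ n) with hW
  have hWmono : Monotone W := ker_pow_mono T
  have key : ∀ n : ℕ,
      ∀ p : {s : Set V // LinearIndependent k ((↑) : s → V) ∧ s ⊆ (W n : Set V) ∧
        (W n : Set V) ⊆ Submodule.span k s},
      ∃ t : Set V, p.1 ⊆ t ∧ LinearIndependent k ((↑) : t → V) ∧ t ⊆ (W (n + 1) : Set V) ∧
        (W (n + 1) : Set V) ⊆ Submodule.span k t := by
    intro n p
    obtain ⟨t, htW, hst, hspan, hli⟩ :=
      exists_linearIndepOn_id_extension p.2.1 (p.2.2.1.trans (hWmono (Nat.le_succ n)))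
    exact ⟨t, hst, hli, htW, hspan⟩
  let f : (n : ℕ) → {s : Set V // LinearIndependent k ((↑) : s → V) ∧ s ⊆ (W n : Set V) ∧
      (W n : Set V) ⊆ Submodule.span k s} := fun n =>
    Nat.rec
      ⟨∅, linearIndependent_empty k V, Set.empty_subset _, by
        intro x hx
        have hx0 : x = 0 := by simpa [hW, LinearMap.mem_ker] using hx
        rw [hx0]; exact Submodule.zero_mem _⟩
      (fun n p => ⟨(key n p).choose, (key n p).choose_spec.2.1,
        (key n p).choose_spec.2.2.1, (key n p).choose_spec.2.2.2⟩) n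
  have hchain : ∀ n, (f n).1 ⊆ (f (n + 1)).1 := fun n => (key n (f n)).choose_spec.1
  have hmono : Monotone fun n => (f n).1 := monotone_nat_of_le_succ hchain
  set S : Set V := ⋃ n, (f n).1 with hS
  have hli : LinearIndependent k ((↑) : S → V) :=
    linearIndepOn_iUnion_of_directed (v := id) hmono.directed_le fun n => (f n).2.1
  have hspan : ∀ v : V, v ∈ Submodule.span k S := by
    intro v
    obtain ⟨i, -, hi⟩ := h v
    have : v ∈ (W i : Set V) := by simpa [hW, LinearMap.mem_ker] using hi
    exact Submodule.span_mono (Set.subset_iUnion (fun n => (f n).1) i) ((f i).2.2.2 this)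
  let b : Module.Basis S k V := Module.Basis.mk hli (by
    rw [Subtype.range_coe]
    exact fun v _ => hspan v)
  have hmemS : ∀ x : S, ∃ n, (x : V) ∈ (f n).1 := fun x => Set.mem_iUnion.1 x.2
  let ℓ : S → ℕ := fun x => Nat.find (hmemS x)
  have hℓmem : ∀ x : S, (x : V) ∈ (f (ℓ x)).1 := fun x => Nat.find_spec (hmemS x)
  have hℓpos : ∀ x : S, 1 ≤ ℓ x := by
    intro x
    rcases Nat.eq_zero_or_pos (ℓ x) with h0 | h1
    · exfalso
      have := hℓmem x
      rw [h0] at this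
      simp [f] at this
    · exact h1
  let r : S → S → Prop := fun x y => Prod.Lex (· < ·) WellOrderingRel (ℓ x, x) (ℓ y, y)
  have hwo : IsWellOrder S r := by
    let emb : r ↪r Prod.Lex ((· < ·) : ℕ → ℕ → Prop) (@WellOrderingRel S) :=
      ⟨⟨fun x => (ℓ x, x), fun a b hab => congrArg Prod.snd hab⟩, Iff.rfl⟩
    exact emb.isWellOrder
  refine ⟨S, r, b, hwo, ?_⟩
  intro x
  obtain ⟨m, hm⟩ := Nat.exists_eq_succ_of_ne_zero (Nat.one_le_iff_ne_zero.1 (hℓpos x))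
  have hbx : b x = (x : V) := Module.Basis.mk_apply _ _ _
  have hxf : (x : V) ∈ (f (m + 1)).1 := by
    have := hℓmem x
    rwa [hm] at this
  have hxW : (x : V) ∈ (W (m + 1) : Set V) := (f (m + 1)).2.2.1 hxf
  have hTx : T (x : V) ∈ (W m : Set V) := by
    have : (T ^ (m + 1)) (x : V) = 0 := by simpa [hW, LinearMap.mem_ker] using hxW
    rw [pow_succ, Module.End.mul_apply] at this
    simpa [hW, LinearMap.mem_ker] using this
  have hsub : (f m).1 ⊆ ⇑b '' {j | r j x} := by
    intro y hy
    have hyS : y ∈ S := Set.mem_iUnion.2 ⟨m, hy⟩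
    have hℓy : ℓ (⟨y, hyS⟩ : S) ≤ m := Nat.find_le hy
    refine ⟨⟨y, hyS⟩, ?_, Module.Basis.mk_apply _ _ _⟩
    exact Prod.Lex.left _ _ (by omega)
  rw [hbx]
  exact Submodule.span_mono hsub ((f m).2.2.2 hTx)

/-- (2) → eigenvalue condition in (4). -/
private lemma eig_of_union [Nontrivial V] {T : Module.End k V}
    (h2 : ∀ v : V, ∃ i : ℕ, 1 ≤ i ∧ (T ^ i) v = 0) :
    ∀ a : k, LinearMap.ker (T - a • (1 : Module.End k V)) ≠ ⊥ ↔ a = 0 := by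
  intro a
  constructor
  · intro hne
    by_contra ha
    obtain ⟨v, hv, hv0⟩ := Submodule.exists_mem_ne_zero_of_ne_bot hne
    have hTv : T v = a • v := by
      have := LinearMap.mem_ker.1 hv
      simp only [LinearMap.sub_apply, LinearMap.smul_apply, Module.End.one_apply] at this
      exact sub_eq_zero.1 this
    have hpow : ∀ n : ℕ, (T ^ n) v = a ^ n • v := by
      intro n
      induction n with
      | zero => simp
      | succ m IH =>
        rw [pow_succ, Module.End.mul_apply, hTv, map_smul, IH, smul_smul, ← pow_succ']
    obtain ⟨i, -, hi0⟩ := h2 v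
    rw [hpow] at hi0
    rcases smul_eq_zero.1 hi0 with h | h
    · exact ha (pow_eq_zero_iff'.mp h).1
    · exact hv0 h
  · rintro rfl
    simp only [zero_smul, sub_zero]
    obtain ⟨v, hv⟩ := exists_ne (0 : V)
    have hex : ∃ n : ℕ, (T ^ n) v = 0 := by
      obtain ⟨i, -, hi⟩ := h2 v
      exact ⟨i, hi⟩
    classical
    set n := Nat.find hex with hn
    have hn0 : n ≠ 0 := by
      intro h
      have := Nat.find_spec hex
      rw [← hn, h] at this
      simp at this
      exact hv this
    obtain ⟨m, hm⟩ := Nat.exists_eq_succ_of_ne_zero hn0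
    have hw0 : (T ^ m) v ≠ 0 := Nat.find_min hex (by omega)
    refine (Submodule.ne_bot_iff _).2 ⟨(T ^ m) v, LinearMap.mem_ker.2 ?_, hw0⟩
    have := Nat.find_spec hex
    rw [← hn, hm, pow_succ', Module.End.mul_apply] at this
    exact this

/-- (4) → (3). -/
private lemma four_to_strict {T : Module.End k V} (h4 : Triangularizable T)
    (heig : ∀ a : k, LinearMap.ker (T - a • (1 : Module.End k V)) ≠ ⊥ ↔ a = 0) :
    StrictlyTriangularizable T := by
  classical
  obtain ⟨ι, r, b, hwo, htri⟩ := h4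
  haveI := hwo
  set c : ι → k := fun i => b.repr (T (b i)) i with hc
  have hsupp : ∀ i j, b.repr (T (b i)) j ≠ 0 → r j i ∨ j = i := by
    intro i j hj
    exact (Module.Basis.mem_span_image b).1 (htri i) (Finset.mem_coe.2 (Finsupp.mem_support_iff.2 hj))
  have hdecomp : ∀ i, T (b i) - c i • b i ∈ Submodule.span k (⇑b '' {j | r j i}) := by
    intro i
    rw [Module.Basis.mem_span_image b]
    intro j hj
    simp only [Finset.mem_coe, Finsupp.mem_support_iff, map_sub, map_smul, Finsupp.sub_apply,
      Finsupp.smul_apply, Module.Basis.repr_self] at hj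
    have hji : j ≠ i := by
      rintro rfl
      rw [Finsupp.single_apply, if_pos rfl, smul_eq_mul, mul_one, hc, sub_self] at hj
      exact hj rfl
    rw [Finsupp.single_apply, if_neg (Ne.symm hji), smul_zero, sub_zero] at hj
    rcases hsupp i j hj with hr | he
    · exact hr
    · exact absurd he hji
  have hc0 : ∀ i, c i = 0 := by
    by_contra hne
    push_neg at hne
    obtain ⟨i₀, hi₀, hmin⟩ := (IsWellFounded.wf (r := r)).has_min {i | c i ≠ 0} hne
    set a : k := c i₀ with ha'
    have ha : a ≠ 0 := hi₀
    set S : Module.End k V := T - a • (1 : Module.End k V) with hSdef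
    have hSapp : ∀ x : V, S x = T x - a • x := by
      intro x
      simp [hSdef, LinearMap.sub_apply, LinearMap.smul_apply, Module.End.one_apply]
    set M : Submodule k V := Submodule.span k (⇑b '' {j | r j i₀}) with hM
    have hmem : ∀ j, r j i₀ → b j ∈ Submodule.map S M := by
      intro j
      induction j using IsWellFounded.induction r with
      | ind j IH =>
        intro hj
        have hcj : c j = 0 := by
          by_contra hcj
          exact hmin j hcj hj
        have hy : T (b j) - c j • b j ∈ Submodule.map S M := by
          refine Submodule.span_le.2 ?_ (hdecomp j)
          rintro _ ⟨m, hm, rfl⟩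
          exact IH m hm (IsTrans.trans m j i₀ hm hj)
        have hbjM : b j ∈ M := Submodule.subset_span ⟨j, hj, rfl⟩
        have hSbj : S (b j) ∈ Submodule.map S M := Submodule.mem_map_of_mem hbjM
        have heq : (T (b j) - c j • b j) - S (b j) = a • b j := by
          rw [hSapp, hcj, zero_smul, sub_zero]
          abel
        have hbj : b j = a⁻¹ • ((T (b j) - c j • b j) - S (b j)) := by
          rw [heq, inv_smul_smul₀ ha]
        rw [hbj]
        exact Submodule.smul_mem _ _ (Submodule.sub_mem _ hy hSbj)
    have hMle : M ≤ Submodule.map S M := by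
      rw [hM]
      refine Submodule.span_le.2 ?_
      rintro _ ⟨m, hm, rfl⟩
      exact hmem m hm
    have hy0 : T (b i₀) - c i₀ • b i₀ ∈ Submodule.map S M := hMle (hdecomp i₀)
    obtain ⟨x, hxM, hx⟩ := hy0
    have hSw : S (b i₀ - x) = 0 := by
      rw [map_sub, hx, hSapp, ← ha']
      abel
    have hw0 : b i₀ - x ≠ 0 := by
      intro hw
      have hxi : b.repr x i₀ = 0 := by
        have := (Module.Basis.mem_span_image b).1 hxM
        by_contra hxi
        exact Std.Irrefl.irrefl i₀ (this (Finset.mem_coe.2 (Finsupp.mem_support_iff.2 hxi)))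
      have : b.repr (b i₀ - x) i₀ = 1 := by
        rw [map_sub, Finsupp.sub_apply, Module.Basis.repr_self, hxi, sub_zero,
          Finsupp.single_apply, if_pos rfl]
      rw [hw] at this
      simp at this
    have : a = 0 := (heig a).1 ((Submodule.ne_bot_iff _).2
      ⟨b i₀ - x, LinearMap.mem_ker.2 hSw, hw0⟩)
    exact ha this
  refine ⟨ι, r, b, hwo, fun i => ?_⟩
  have := hdecomp i
  rwa [hc0 i, zero_smul, sub_zero] at this

end aux

/-- For a transformation `T` of a nonzero space `V`, the following are equivalent:
(1) `T` is topologically nilpotent in the function topology;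
(2) `V = ⋃_{i≥1} ker(T^i)`;
(3) `T` is strictly triangularizable;
(4) `T` is triangularizable and `ker(T - aI) ≠ 0` iff `a = 0`. -/
theorem topologically_nilpotent_tfae
    {k : Type u} {V : Type v} [Field k] [AddCommGroup V] [Module k V] [Nontrivial V]
    (T : Module.End k V) :
    List.TFAE
      [Filter.Tendsto (fun i : ℕ => T ^ i) Filter.atTop
          (@nhds _ (endFunctionTopology k V) 0),
        ∀ v : V, ∃ i : ℕ, 1 ≤ i ∧ (T ^ i) v = 0,
        StrictlyTriangularizable T,
        Triangularizable T ∧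
          ∀ a : k, LinearMap.ker (T - a • (1 : Module.End k V)) ≠ ⊥ ↔ a = 0] := by
  tfae_have 1 ↔ 2 := part1_iff T
  tfae_have 2 → 3 := union_to_strict
  tfae_have 3 → 2 := strict_to_union
  tfae_have 3 → 4 := by
    intro h3
    obtain ⟨ι, r, b, hwo, htri⟩ := h3
    refine ⟨⟨ι, r, b, hwo, fun i => Submodule.span_mono
      (Set.image_mono fun j hj => Or.inl hj) (htri i)⟩, ?_⟩
    exact eig_of_union (strict_to_union ⟨ι, r, b, hwo, htri⟩)
  tfae_have 4 → 3 := fun h => four_to_strict h.1 h.2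
  tfae_finish
end

section
/- Let k be a field, V a k-vector space, and T a linear transformation of V such that p(T) = 0 for some nonconstant polynomial p(x) ∈ k[x]. Then the double centralizer of T in End_k(V) equals the unital subalgebra k[T] generated by T; moreover k[T] is closed in the function topology, so C(C(T)) = closure of k[T] = k[T]. -/
universe u v

open Polynomial
set_option synthInstance.maxHeartbeats 1000000
set_option maxHeartbeats 1000000

section Aux
variable {k : Type u} {V : Type v} [Field k] [AddCommGroup V] [Module k V]

/-- Existence of an element of exact order `m` in a module over `k[X]` whose
annihilator ideal is generated by `m`. -/
lemma exists_exact_order {M : Type v} [AddCommGroup M] [Module k[X] M]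
    (m : k[X]) (hm0 : m ≠ 0) (hann : ∀ x : M, m • x = 0)
    (hmin : ∀ q : k[X], (∀ x : M, q • x = 0) → m ∣ q) :
    ∃ e : M, ∀ q : k[X], q • e = 0 ↔ m ∣ q := by
  classical
  set s := UniqueFactorizationMonoid.normalizedFactors m with hs
  set P := s.toFinset with hP
  have hprod : Associated (∏ p ∈ P, p ^ s.count p) m := by
    rw [← Finset.prod_multiset_count]
    exact UniqueFactorizationMonoid.prod_normalizedFactors hm0
  obtain ⟨u, hu⟩ := hprod
  have hprime : ∀ p ∈ P, Prime p := fun p hp =>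
    UniqueFactorizationMonoid.prime_of_normalized_factor p (Multiset.mem_toFinset.mp hp)
  have hnorm : ∀ p ∈ P, normalize p = p := fun p hp =>
    UniqueFactorizationMonoid.normalize_normalized_factor p (Multiset.mem_toFinset.mp hp)
  have hnd : ∀ p ∈ P, ∀ p' ∈ P, p ≠ p' → ¬ p ∣ p' ^ s.count p' := by
    intro p hp p' hp' hne hdvd
    have hdvd' : p ∣ p' := (hprime p hp).dvd_of_dvd_pow hdvd
    have hasc : Associated p p' :=
      (hprime p hp).irreducible.associated_of_dvd (hprime p' hp').irreducible hdvd'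
    refine hne ?_
    rw [← hnorm p hp, ← hnorm p' hp', normalize_eq_normalize_iff]
    exact ⟨hasc.dvd, hasc.symm.dvd⟩
  have hstep : ∀ p ∈ P, ∃ ep : M, ∀ q : k[X], q • ep = 0 ↔ p ^ s.count p ∣ q := by
    intro p hp
    set r : k[X] := ∏ p' ∈ P.erase p, p' ^ s.count p' with hr
    have hmul : p ^ s.count p * r = ∏ p' ∈ P, p' ^ s.count p' :=
      Finset.mul_prod_erase P (fun p' => p' ^ s.count p') hp
    have hpr : p ^ s.count p * r = m * ↑u⁻¹ := by
      rw [hmul, ← hu, mul_assoc]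
      simp
    obtain ⟨b, hb⟩ : ∃ b, s.count p = b + 1 := by
      have : 0 < s.count p := Multiset.count_pos.mpr (Multiset.mem_toFinset.mp hp)
      exact ⟨s.count p - 1, by omega⟩
    have hne : ¬ (∀ x : M, (p ^ b * r) • x = 0) := by
      intro hall
      obtain ⟨t, ht⟩ := hmin _ hall
      have hpm : p * (p ^ b * r) = m * ↑u⁻¹ := by
        rw [← mul_assoc, ← pow_succ', ← hb, hpr]
      rw [ht, ← mul_assoc] at hpm
      have hmm : m * (p * t) = m * ↑u⁻¹ := by rw [← hpm]; ring
      have h2 := mul_left_cancel₀ hm0 hmm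
      have hup : IsUnit p := IsUnit.of_mul_eq_one (t * ↑u) (by rw [← mul_assoc, h2]; simp)
      exact (hprime p hp).not_isUnit hup
    push_neg at hne
    obtain ⟨vp, hvp⟩ := hne
    refine ⟨r • vp, ?_⟩
    intro q
    constructor
    · intro hq
      set γ := EuclideanDomain.gcd q (p ^ (b + 1)) with hγ
      have hpb1 : (p ^ (b + 1)) • (r • vp) = 0 := by
        rw [smul_smul, ← hb, hpr, mul_smul, hann]
      have hγep : γ • (r • vp) = 0 := by
        rw [hγ, EuclideanDomain.gcd_eq_gcd_ab q (p ^ (b + 1)), add_smul,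
          mul_comm q, mul_smul, hq, smul_zero, zero_add,
          mul_comm (p ^ (b + 1)), mul_smul, hpb1, smul_zero]
      have hγdvd : γ ∣ p ^ (b + 1) := EuclideanDomain.gcd_dvd_right _ _
      obtain ⟨i, hi, hassoc⟩ := (dvd_prime_pow (hprime p hp) (b + 1)).mp hγdvd
      have hieq : i = b + 1 := by
        by_contra hine
        have hib : i ≤ b := by omega
        have hzero : p ^ b • (r • vp) = 0 := by
          obtain ⟨z, hz⟩ : γ ∣ p ^ b := hassoc.dvd.trans (pow_dvd_pow p hib)
          rw [hz, mul_comm γ z, mul_smul, hγep, smul_zero]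
        rw [smul_smul] at hzero
        exact hvp hzero
      rw [hb]
      have h1 : p ^ (b + 1) ∣ γ := by
        rw [← hieq]
        exact hassoc.symm.dvd
      exact h1.trans (EuclideanDomain.gcd_dvd_left q (p ^ (b + 1)))
    · rintro ⟨t, rfl⟩
      have hqe : (p ^ s.count p * t) * r = t * ↑u⁻¹ * m := by
        calc (p ^ s.count p * t) * r = t * (p ^ s.count p * r) := by ring
        _ = t * (m * ↑u⁻¹) := by rw [hpr]
        _ = t * ↑u⁻¹ * m := by ring
      rw [smul_smul, hqe, mul_smul, hann, smul_zero]
  choose E hE using hstep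
  refine ⟨∑ p ∈ P.attach, E p.1 p.2, ?_⟩
  intro q
  constructor
  · intro hq
    have hdvd : ∀ p ∈ P, p ^ s.count p ∣ q := by
      intro p hp
      set r : k[X] := ∏ p' ∈ P.erase p, p' ^ s.count p' with hr
      have hre : r • (∑ p' ∈ P.attach, E p'.1 p'.2) = r • E p hp := by
        rw [Finset.smul_sum]
        rw [Finset.sum_eq_single_of_mem (⟨p, hp⟩ : {x // x ∈ P}) (Finset.mem_attach P _)]
        intro p' _ hnep
        apply (hE p'.1 p'.2 r).mpr
        apply Finset.dvd_prod_of_mem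
        exact Finset.mem_erase.mpr ⟨fun h => hnep (Subtype.ext h), p'.2⟩
      have hq2 : (q * r) • E p hp = 0 := by
        rw [mul_smul]
        rw [← hre, smul_smul, mul_comm, ← smul_smul, hq, smul_zero]
      have hdq := (hE p hp (q * r)).mp hq2
      have hnotdvd : ¬ p ∣ r := by
        intro hd
        obtain ⟨p', hp'mem, hp'd⟩ := (hprime p hp).exists_mem_finset_dvd hd
        exact hnd p hp p' (Finset.mem_of_mem_erase hp'mem)
          (Ne.symm (Finset.mem_erase.mp hp'mem).1) hp'd
      exact (hprime p hp).pow_dvd_of_dvd_mul_right _ hnotdvd hdq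
    have hcop : (↑P : Set k[X]).Pairwise (Function.onFun IsCoprime fun p => p ^ s.count p) := by
      intro p hp p' hp' hne
      have hpP := Finset.mem_coe.mp hp
      have hp'P := Finset.mem_coe.mp hp'
      have h1 : IsCoprime p p' := by
        rw [(hprime p hpP).irreducible.coprime_iff_not_dvd]
        intro hd
        have hcnt : s.count p' ≠ 0 := by
          have : 0 < s.count p' := Multiset.count_pos.mpr (Multiset.mem_toFinset.mp hp'P)
          omega
        exact hnd p hpP p' hp'P hne (hd.trans (dvd_pow_self p' hcnt))
      exact (h1.pow : IsCoprime (p ^ s.count p) (p' ^ s.count p'))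
    have hProd : (∏ p ∈ P, p ^ s.count p) ∣ q := Finset.prod_dvd_of_coprime hcop hdvd
    exact (Associated.symm ⟨u, hu⟩).dvd.trans hProd
  · rintro ⟨t, rfl⟩
    rw [mul_comm, mul_smul, hann, smul_zero]

lemma baer_quot (m : k[X]) (hm0 : m ≠ 0) :
    Module.Baer (k[X] ⧸ Ideal.span {m}) (k[X] ⧸ Ideal.span {m}) := by
  classical
  haveI : IsPrincipalIdealRing (k[X] ⧸ Ideal.span {m}) :=
    IsPrincipalIdealRing.of_surjective (Ideal.Quotient.mk (Ideal.span {m}))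
      Ideal.Quotient.mk_surjective
  intro I' g
  set φ : k[X] →+* k[X] ⧸ Ideal.span {m} := Ideal.Quotient.mk (Ideal.span {m}) with hφ
  have hφm : φ m = 0 := Ideal.Quotient.eq_zero_iff_mem.mpr (Ideal.mem_span_singleton_self m)
  obtain ⟨d, hd⟩ := Ideal.Quotient.mk_surjective (Submodule.IsPrincipal.generator I')
  have hI' : I' = Ideal.span {φ d} := by
    rw [hd, Ideal.span_singleton_generator]
  set d' := EuclideanDomain.gcd d m with hd'def
  have hd'm : d' ∣ m := EuclideanDomain.gcd_dvd_right d m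
  obtain ⟨c, hc⟩ := hd'm
  have hc0 : c ≠ 0 := fun h => hm0 (by rw [hc, h, mul_zero])
  have hd'eq : φ d' = φ d * φ (EuclideanDomain.gcdA d m) := by
    conv_lhs => rw [hd'def, EuclideanDomain.gcd_eq_gcd_ab d m]
    rw [map_add, map_mul, map_mul, hφm, zero_mul, add_zero]
  have h1 : φ d' ∈ Ideal.span {φ d} :=
    Ideal.mem_span_singleton'.mpr ⟨φ (EuclideanDomain.gcdA d m), by rw [mul_comm, ← hd'eq]⟩
  have h2 : φ d ∈ Ideal.span {φ d'} :=
    Ideal.mem_span_singleton.mpr (map_dvd φ (EuclideanDomain.gcd_dvd_left d m))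
  have hmemI : φ d' ∈ I' := by rw [hI']; exact h1
  have hI'2 : I' = Ideal.span {φ d'} := by
    apply le_antisymm
    · rw [hI']
      exact (Ideal.span_singleton_le_iff_mem _).mpr h2
    · rw [hI']
      exact (Ideal.span_singleton_le_iff_mem _).mpr h1
  set x₀ : I' := ⟨φ d', hmemI⟩ with hx₀
  set w := g x₀ with hwdef
  obtain ⟨w₀, hw₀⟩ := Ideal.Quotient.mk_surjective w
  have hcd' : c * d' = m := by rw [mul_comm]; exact hc.symm
  have hsm : (φ c) • x₀ = 0 := by
    apply Subtype.ext
    show φ c * φ d' = 0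
    rw [← map_mul, hcd', hφm]
  have hcw : φ c * w = 0 := by
    have hh := g.map_smul (φ c) x₀
    rw [hsm, map_zero] at hh
    rw [← smul_eq_mul, hh]
  have hmdvd : m ∣ c * w₀ := by
    rw [← Ideal.mem_span_singleton]
    apply Ideal.Quotient.eq_zero_iff_mem.mp
    show φ (c * w₀) = 0
    rw [map_mul, hw₀, hcw]
  obtain ⟨t, ht⟩ : d' ∣ w₀ := by
    obtain ⟨u, hu⟩ := hmdvd
    refine ⟨u, ?_⟩
    apply mul_left_cancel₀ hc0
    rw [hu, hc]; ring
  refine ⟨LinearMap.toSpanSingleton _ _ (φ t), ?_⟩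
  intro x hx
  have hx' : x ∈ Ideal.span {φ d'} := hI'2 ▸ hx
  obtain ⟨r, hr⟩ := Ideal.mem_span_singleton'.mp hx'
  have hxel : (⟨x, hx⟩ : I') = r • x₀ := Subtype.ext (by simp [← hr, smul_eq_mul, hx₀])
  rw [hxel, map_smul, ← hwdef]
  show x • φ t = r • w
  rw [smul_eq_mul, smul_eq_mul, ← hr, ← hw₀, ht, map_mul]
  ring

lemma key_commutant (T : Module.End k V) (p : k[X]) (hp : p ≠ 0) (hpT : aeval T p = 0)
    (S : Module.End k V) (hS : ∀ A : Module.End k V, T * A = A * T → A * S = S * A) :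
    ∃ g : k[X], S = aeval T g := by
  classical
  have hgen : Ideal.span {Submodule.IsPrincipal.generator
      (RingHom.ker (aeval T : k[X] →ₐ[k] Module.End k V))} =
      RingHom.ker (aeval T : k[X] →ₐ[k] Module.End k V) :=
    Ideal.span_singleton_generator _
  set m : k[X] := Submodule.IsPrincipal.generator
      (RingHom.ker (aeval T : k[X] →ₐ[k] Module.End k V)) with hmdef
  have hm : ∀ q : k[X], aeval T q = 0 ↔ m ∣ q := by
    intro q
    rw [← Ideal.mem_span_singleton, hgen]
    exact RingHom.mem_ker.symm
  have hm0 : m ≠ 0 := by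
    intro h
    apply hp
    have hpm := (hm p).mp hpT
    rw [h] at hpm
    simpa using hpm
  set f := Module.AEval'.of T with hf
  have hsmul : ∀ (q : k[X]) (v : V), q • (f v) = f (aeval T q v) := fun q v => rfl
  have htor : ∀ x : Module.AEval' T, m • x = 0 := by
    intro x
    have hmz : aeval T m = 0 := (hm m).mpr dvd_rfl
    have h2 := hsmul m (f.symm x)
    rw [LinearEquiv.apply_symm_apply] at h2
    rw [h2, hmz]
    simp
  have hminq : ∀ q : k[X], (∀ x : Module.AEval' T, q • x = 0) → m ∣ q := by
    intro q hq
    rw [← hm]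
    apply LinearMap.ext
    intro v
    have h2 := hsmul q v
    rw [hq (f v)] at h2
    have h3 := congrArg f.symm h2.symm
    simpa using h3
  obtain ⟨e, he⟩ := exists_exact_order (M := Module.AEval' T) m hm0 htor hminq
  letI : Module (k[X] ⧸ Ideal.span {m}) (Module.AEval' T) :=
    Module.IsTorsionBy.module (R := k[X]) (M := Module.AEval' T) (r := m) htor
  haveI hST : IsScalarTower k (k[X] ⧸ Ideal.span {m}) (Module.AEval' T) :=
    Module.IsTorsionBySet.isScalarTower ((Module.isTorsionBySet_span_singleton_iff m).mpr htor)
  have hmk : ∀ (q : k[X]) (x : Module.AEval' T),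
      (Ideal.Quotient.mk (Ideal.span {m}) q) • x = q • x :=
    fun q x => Module.IsTorsionBy.mk_smul htor q x
  set ψe := LinearMap.toSpanSingleton (k[X] ⧸ Ideal.span {m}) (Module.AEval' T) e with hψe
  have hinj : Function.Injective ψe := by
    intro a b hab
    simp only [hψe, LinearMap.toSpanSingleton_apply] at hab
    have hδ : (a - b) • e = 0 := by rw [sub_smul, hab, sub_self]
    obtain ⟨c, hc⟩ := Ideal.Quotient.mk_surjective (a - b)
    rw [← hc, hmk] at hδ
    have hdvd := (he c).mp hδ
    have hc0 : Ideal.Quotient.mk (Ideal.span {m}) c = 0 :=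
      Ideal.Quotient.eq_zero_iff_mem.mpr (Ideal.mem_span_singleton.mpr hdvd)
    rw [hc0] at hc
    exact sub_eq_zero.mp hc.symm
  obtain ⟨h, hh⟩ := (baer_quot m hm0).extension_property ψe hinj LinearMap.id
  have hhe : ∀ r : k[X] ⧸ Ideal.span {m}, h (r • e) = r := by
    intro r
    have h2 := congrArg (fun φ => φ r) hh
    simpa [hψe, LinearMap.toSpanSingleton_apply] using h2
  have hgenA : ∀ (A : Module.AEval' T →ₗ[k[X] ⧸ Ideal.span {m}] Module.AEval' T) (v : V),
      S (f.symm (A (f v))) = f.symm (A (f (S v))) := by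
    intro A v
    have hksmul : ∀ (a : k) (x : Module.AEval' T), A (a • x) = a • A x := by
      intro a x
      rw [← smul_one_smul (k[X] ⧸ Ideal.span {m}) a x, A.map_smul, smul_one_smul]
    set A₀ : Module.End k V :=
      { toFun := fun w => f.symm (A (f w))
        map_add' := by intro w1 w2; simp
        map_smul' := by intro a w; simp [hksmul] } with hA₀
    have hXsmul : ∀ x : Module.AEval' T, A ((X : k[X]) • x) = (X : k[X]) • A x := by
      intro x
      rw [← hmk, A.map_smul, hmk]
    have hcomm : T * A₀ = A₀ * T := by
      apply LinearMap.ext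
      intro w
      show T (A₀ w) = A₀ (T w)
      show T (f.symm (A (f w))) = f.symm (A (f (T w)))
      have h1 : f (T w) = (X : k[X]) • f w := (Module.AEval'.X_smul_of T w).symm
      rw [h1, hXsmul]
      exact (Module.AEval'.of_symm_X_smul T _).symm
    have happ : A₀ (S v) = S (A₀ v) := by
      have h2 := hS A₀ hcomm
      calc A₀ (S v) = (A₀ * S) v := rfl
      _ = (S * A₀) v := by rw [h2]
      _ = S (A₀ v) := rfl
    exact happ.symm
  set ebar := f.symm e with hebar
  have hfe : f ebar = e := by rw [hebar]; simp
  have hproj : ∀ x : Module.AEval' T,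
      ((LinearMap.toSpanSingleton (k[X] ⧸ Ideal.span {m}) (Module.AEval' T) x).comp h) e
        = x := by
    intro x
    have h1 : h e = 1 := by
      have h2 := hhe 1
      rw [one_smul] at h2
      exact h2
    simp [LinearMap.toSpanSingleton_apply, h1]
  have hSe : f (S ebar) = (h (f (S ebar))) • e := by
    have h2 := hgenA ((LinearMap.toSpanSingleton (k[X] ⧸ Ideal.span {m})
      (Module.AEval' T) e).comp h) ebar
    rw [hfe, hproj e] at h2
    have h3 := congrArg f h2
    rw [LinearEquiv.apply_symm_apply] at h3
    conv_lhs => rw [h3]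
    simp [LinearMap.toSpanSingleton_apply]
  obtain ⟨g, hg⟩ := Ideal.Quotient.mk_surjective (h (f (S ebar)))
  refine ⟨g, ?_⟩
  apply LinearMap.ext
  intro v
  have h2 := hgenA ((LinearMap.toSpanSingleton (k[X] ⧸ Ideal.span {m})
    (Module.AEval' T) (f v)).comp h) ebar
  rw [hfe, hproj (f v)] at h2
  rw [LinearEquiv.symm_apply_apply] at h2
  rw [hSe] at h2
  have h3 : ((LinearMap.toSpanSingleton (k[X] ⧸ Ideal.span {m})
      (Module.AEval' T) (f v)).comp h) ((h (f (S ebar))) • e)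
      = (h (f (S ebar))) • (f v) := by
    rw [LinearMap.map_smul, hproj (f v)]
  rw [h3, ← hg, hmk] at h2
  rw [hsmul g v, LinearEquiv.symm_apply_apply] at h2
  exact h2

lemma closure_span_fin (n : ℕ) (f : Fin n → Module.End k V) :
    @closure _ (endFunctionTopology k V) ↑(Submodule.span k (Set.range f)) ⊆
      (↑(Submodule.span k (Set.range f)) : Set (Module.End k V)) := by
  classical
  letI : TopologicalSpace V := ⊥
  haveI : DiscreteTopology V := ⟨rfl⟩
  letI : TopologicalSpace (Module.End k V) := endFunctionTopology k V
  set F := Submodule.span k (Set.range f) with hF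
  haveI : FiniteDimensional k F := FiniteDimensional.span_of_finite k (Set.finite_range f)
  intro S hS
  have hopen : ∀ (s : Finset V), IsOpen {B : Module.End k V | ∀ v ∈ s, B v = S v} := by
    intro s
    have heq : {B : Module.End k V | ∀ v ∈ s, B v = S v} =
        (fun (B : Module.End k V) => (B : V → V)) ⁻¹' (Set.pi ↑s (fun v => {S v})) := by
      ext B; simp [Set.mem_pi]
    rw [heq]
    exact (isOpen_set_pi s.finite_toSet (fun v _ => isOpen_discrete _)).preimage
      continuous_induced_dom
  have happrox : ∀ s : Finset V, ∃ A : Module.End k V, A ∈ F ∧ ∀ v ∈ s, A v = S v := by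
    intro s
    obtain ⟨A, hAo, hAF⟩ := (mem_closure_iff.mp hS) _ (hopen s) (fun v _ => rfl)
    exact ⟨A, hAF, hAo⟩
  let K : Finset V → Submodule k F := fun s =>
    { carrier := {A : F | ∀ v ∈ s, (A : Module.End k V) v = 0}
      add_mem' := by
        intro a b ha hb v hv
        simp only [Submodule.coe_add, LinearMap.add_apply, ha v hv, hb v hv, add_zero]
      zero_mem' := by intro v hv; simp
      smul_mem' := by
        intro c a ha v hv
        have ha : ∀ v ∈ s, (a : Module.End k V) v = 0 := ha
        simp only [Submodule.coe_smul, LinearMap.smul_apply, ha v hv, smul_zero] }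
  have hKmem : ∀ (s : Finset V) (A : F), A ∈ K s ↔ ∀ v ∈ s, (A : Module.End k V) v = 0 :=
    fun s A => Iff.rfl
  obtain ⟨K₀, ⟨s₀, rfl⟩, hmin⟩ :=
    IsArtinian.set_has_minimal (Set.range K) ⟨K ∅, Set.mem_range_self ∅⟩
  have hbot : K s₀ = ⊥ := by
    by_contra hne
    obtain ⟨B, hBmem, hBne⟩ := Submodule.exists_mem_ne_zero_of_ne_bot hne
    have : ∃ w : V, (B : Module.End k V) w ≠ 0 := by
      by_contra hall
      push_neg at hall
      apply hBne
      apply Subtype.ext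
      exact LinearMap.ext fun w => hall w
    obtain ⟨w, hw⟩ := this
    have hlt : K (insert w s₀) < K s₀ := by
      apply lt_of_le_of_ne
      · intro A hA v hv
        exact hA v (Finset.mem_insert_of_mem hv)
      · intro heq
        apply hw
        have : B ∈ K (insert w s₀) := heq ▸ hBmem
        exact this w (Finset.mem_insert_self w s₀)
    exact hmin (K (insert w s₀)) (Set.mem_range_self _) hlt
  obtain ⟨A, hAF, hAs⟩ := happrox s₀
  have hSA : S = A := by
    apply LinearMap.ext
    intro w
    obtain ⟨A', hA'F, hA's⟩ := happrox (insert w s₀)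
    have hdiff : (⟨A', hA'F⟩ - ⟨A, hAF⟩ : F) ∈ K s₀ := by
      intro v hv
      simp only [Submodule.coe_sub, LinearMap.sub_apply]
      rw [hA's v (Finset.mem_insert_of_mem hv), hAs v hv, sub_self]
    rw [hbot, Submodule.mem_bot, sub_eq_zero] at hdiff
    have hAA' : A' = A := congrArg Subtype.val hdiff
    rw [← hA's w (Finset.mem_insert_self w s₀), hAA']
  rw [hSA]
  exact hAF

lemma adjoin_eq_span (T : Module.End k V) (p : k[X]) (hp : p.natDegree ≠ 0)
    (hpT : aeval T p = 0) :
    ∃ (n : ℕ) (f : Fin n → Module.End k V),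
      ((Algebra.adjoin k ({T} : Set (Module.End k V))) : Set (Module.End k V)) =
        ↑(Submodule.span k (Set.range f)) := by
  have hp0 : p ≠ 0 := fun h => hp (by simp [h])
  set m : k[X] := p * C p.leadingCoeff⁻¹ with hm
  have hmonic : m.Monic := monic_mul_leadingCoeff_inv hp0
  have hmT : aeval T m = 0 := by rw [hm, map_mul, hpT, zero_mul]
  set n := m.natDegree with hn
  refine ⟨n, fun i => T ^ (i : ℕ), ?_⟩
  ext x
  rw [SetLike.mem_coe, Algebra.adjoin_singleton_eq_range_aeval, AlgHom.mem_range]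
  constructor
  · rintro ⟨q, rfl⟩
    have hq : aeval T q = aeval T (q %ₘ m) := by
      conv_lhs => rw [← modByMonic_add_div q m]
      rw [map_add, map_mul, hmT, zero_mul, add_zero]
    rw [hq]
    rcases eq_or_ne (q %ₘ m) 0 with h0 | h0
    · rw [h0, map_zero]
      exact Submodule.zero_mem _
    · have hdeg : (q %ₘ m).natDegree < n := by
        have := degree_modByMonic_lt q hmonic
        exact natDegree_lt_natDegree h0 this
      rw [Polynomial.aeval_eq_sum_range' hdeg]
      apply Submodule.sum_mem
      intro i hi
      rw [Finset.mem_range] at hi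
      exact Submodule.smul_mem _ _ (Submodule.subset_span ⟨⟨i, hi⟩, rfl⟩)
  · intro hx
    have hsub : Set.range (fun i : Fin n => T ^ (i : ℕ)) ⊆
        (Subalgebra.toSubmodule (aeval T : k[X] →ₐ[k] Module.End k V).range : Set (Module.End k V)) := by
      rintro _ ⟨i, rfl⟩
      exact ⟨X ^ (i : ℕ), by simp⟩
    have := Submodule.span_le.mpr hsub hx
    exact this

end Aux

/-- If `T` satisfies a nonconstant polynomial, then the double centralizer of `T` in
`End_k(V)` equals `k[T]`, the unital subalgebra generated by `T`; moreover `k[T]` is closed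
in the function topology. -/
theorem double_centralizer_eq_adjoin
    {k : Type u} {V : Type v} [Field k] [AddCommGroup V] [Module k V]
    (T : Module.End k V) (p : k[X]) (hp : p.natDegree ≠ 0) (hpT : aeval T p = 0) :
    ((Subalgebra.centralizer k
        ((Subalgebra.centralizer k ({T} : Set (Module.End k V)) :
          Subalgebra k (Module.End k V)) : Set (Module.End k V))) :
        Set (Module.End k V)) =
      ((Algebra.adjoin k ({T} : Set (Module.End k V))) : Set (Module.End k V)) ∧
    @closure _ (endFunctionTopology k V)
        ((Algebra.adjoin k ({T} : Set (Module.End k V))) : Set (Module.End k V)) =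
      ((Algebra.adjoin k ({T} : Set (Module.End k V))) : Set (Module.End k V)) := by
  have hp0 : p ≠ 0 := fun h => hp (by simp [h])
  constructor
  · apply Set.eq_of_subset_of_subset
    · intro S hS
      have hS' : ∀ A : Module.End k V, T * A = A * T → A * S = S * A := by
        intro A hA
        have hmem : A ∈ Subalgebra.centralizer k ({T} : Set (Module.End k V)) := by
          rw [Subalgebra.mem_centralizer_iff]
          intro g hg
          rw [Set.mem_singleton_iff] at hg
          subst hg
          exact hA
        rw [SetLike.mem_coe, Subalgebra.mem_centralizer_iff] at hS
        exact hS A hmem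
      obtain ⟨g, hg⟩ := key_commutant T p hp0 hpT S hS'
      rw [SetLike.mem_coe, Algebra.adjoin_singleton_eq_range_aeval]
      exact ⟨g, hg.symm⟩
    · intro S hS
      rw [SetLike.mem_coe] at hS ⊢
      rw [Subalgebra.mem_centralizer_iff]
      intro A hA
      rw [SetLike.mem_coe, Subalgebra.mem_centralizer_iff] at hA
      have hTA : T * A = A * T := hA T (Set.mem_singleton T)
      -- A commutes with T, hence with everything in the adjoin of T
      have : S ∈ Subalgebra.centralizer k ({A} : Set (Module.End k V)) := by
        have hle : Algebra.adjoin k ({T} : Set (Module.End k V)) ≤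
            Subalgebra.centralizer k ({A} : Set (Module.End k V)) := by
          apply Algebra.adjoin_le
          intro x hx
          rw [Set.mem_singleton_iff] at hx; subst hx
          rw [SetLike.mem_coe, Subalgebra.mem_centralizer_iff]
          intro g hg
          rw [Set.mem_singleton_iff] at hg; subst hg
          exact hTA.symm
        exact hle hS
      rw [Subalgebra.mem_centralizer_iff] at this
      exact this A (Set.mem_singleton A)
  · obtain ⟨n, f, hnf⟩ := adjoin_eq_span T p hp hpT
    rw [hnf]
    apply Set.eq_of_subset_of_subset
    · exact closure_span_fin n f
    · exact @subset_closure _ (endFunctionTopology k V) _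
end
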